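/- Let q ≥ 2 be an integer and let T be a locally finite tree on a vertex set V that is regular of degree q+1. Then the automorphism group of T acts transitively on ordered pairs of adjacent vertices: for any adjacent vertices x₀, x₁ ∈ V and any adjacent vertices y₀, y₁ ∈ V, there exists a graph automorphism f of T with f(x₀) = y₀ and f(x₁) = y₁. -/

import Mathlib

open SimpleGraph
open scoped Classical

noncomputable section Stmt16Aux

namespace Stmt16

variable {V : Type*}

/-! ### Choice of bijections between finite sets -/

/-- `σ` and `τ` form a bijection pair between `A` and `B` sending `p` to `q` if applicable. -/
def Good (A B : Set V) (p q : V) (σ τ : V → V) : Prop :=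
  (∀ v ∈ A, σ v ∈ B) ∧ (∀ w ∈ B, τ w ∈ A) ∧ (∀ v ∈ A, τ (σ v) = v) ∧
    (∀ w ∈ B, σ (τ w) = w) ∧ (p ∈ A → q ∈ B → σ p = q)

lemma exists_good (A B : Set V) (hA : A.Finite) (hB : B.Finite)
    (hcard : A.ncard = B.ncard) (p q : V) : ∃ σ τ : V → V, Good A B p q σ τ := by
  haveI := hA.fintype
  haveI := hB.fintype
  have hfc : Fintype.card A = Fintype.card B := by
    rwa [← Nat.card_coe_set_eq, ← Nat.card_coe_set_eq,
      Nat.card_eq_fintype_card, Nat.card_eq_fintype_card] at hcard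
  obtain ⟨e0⟩ : Nonempty (A ≃ B) := ⟨Fintype.equivOfCardEq hfc⟩
  have key : ∀ e : A ≃ B,
      (∀ v ∈ A, (fun v => if hv : v ∈ A then (e ⟨v, hv⟩ : V) else v) v ∈ B) ∧
      (∀ w ∈ B, (fun w => if hw : w ∈ B then (e.symm ⟨w, hw⟩ : V) else w) w ∈ A) ∧
      (∀ v ∈ A, (fun w => if hw : w ∈ B then (e.symm ⟨w, hw⟩ : V) else w)
        ((fun v => if hv : v ∈ A then (e ⟨v, hv⟩ : V) else v) v) = v) ∧
      (∀ w ∈ B, (fun v => if hv : v ∈ A then (e ⟨v, hv⟩ : V) else v)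
        ((fun w => if hw : w ∈ B then (e.symm ⟨w, hw⟩ : V) else w) w) = w) := by
    intro e
    refine ⟨?_, ?_, ?_, ?_⟩
    · intro v hv; simp only [dif_pos hv]; exact (e ⟨v, hv⟩).2
    · intro w hw; simp only [dif_pos hw]; exact (e.symm ⟨w, hw⟩).2
    · intro v hv
      dsimp only
      have h1 : (if hv' : v ∈ A then (e ⟨v, hv'⟩ : V) else v) = (e ⟨v, hv⟩ : V) := dif_pos hv
      rw [h1]
      have h2 : (e ⟨v, hv⟩ : V) ∈ B := (e ⟨v, hv⟩).2
      rw [dif_pos h2]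
      have : (⟨(e ⟨v, hv⟩ : V), h2⟩ : B) = e ⟨v, hv⟩ := rfl
      rw [this, Equiv.symm_apply_apply]
    · intro w hw
      dsimp only
      have h1 : (if hw' : w ∈ B then (e.symm ⟨w, hw'⟩ : V) else w) = (e.symm ⟨w, hw⟩ : V) :=
        dif_pos hw
      rw [h1]
      have h2 : (e.symm ⟨w, hw⟩ : V) ∈ A := (e.symm ⟨w, hw⟩).2
      rw [dif_pos h2]
      have : (⟨(e.symm ⟨w, hw⟩ : V), h2⟩ : A) = e.symm ⟨w, hw⟩ := rfl
      rw [this, Equiv.apply_symm_apply]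
  by_cases hpq : p ∈ A ∧ q ∈ B
  · set e : A ≃ B := e0.trans (Equiv.swap (e0 ⟨p, hpq.1⟩) ⟨q, hpq.2⟩) with he
    obtain ⟨k1, k2, k3, k4⟩ := key e
    refine ⟨_, _, k1, k2, k3, k4, ?_⟩
    intro hp hq
    rw [dif_pos hp]
    have h5 : e ⟨p, hp⟩ = ⟨q, hpq.2⟩ := by
      rw [he, Equiv.trans_apply]
      have hpp : (⟨p, hp⟩ : A) = ⟨p, hpq.1⟩ := rfl
      rw [hpp, Equiv.swap_apply_left]
    rw [h5]
  · obtain ⟨k1, k2, k3, k4⟩ := key e0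
    exact ⟨_, _, k1, k2, k3, k4, fun hp hq => absurd ⟨hp, hq⟩ hpq⟩

/-- A chosen bijection pair between `A` and `B`. -/
def pick (p q : V) (A B : Set V) : (V → V) × (V → V) :=
  if h : A.Finite ∧ B.Finite ∧ A.ncard = B.ncard then
    ⟨(exists_good A B h.1 h.2.1 h.2.2 p q).choose,
      (exists_good A B h.1 h.2.1 h.2.2 p q).choose_spec.choose⟩
  else ⟨id, id⟩

lemma pick_good {A B : Set V} (hA : A.Finite) (hB : B.Finite) (hcard : A.ncard = B.ncard)
    (p q : V) : Good A B p q (pick p q A B).1 (pick p q A B).2 := by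
  rw [pick, dif_pos ⟨hA, hB, hcard⟩]
  exact (exists_good A B hA hB hcard p q).choose_spec.choose_spec

variable (T : SimpleGraph V)

/-- Children of `a` in the tree rooted at `r`. -/
def childSet (r a : V) : Set V := {u | T.Adj a u ∧ T.dist r a + 1 = T.dist r u}

/-- Parent of `v` in the tree rooted at `r`. -/
def par (r v : V) : V :=
  if h : ∃ u, T.Adj u v ∧ T.dist r u + 1 = T.dist r v then h.choose else v

lemma exists_parent (hc : T.Connected) (r : V) {v : V} (hv : T.dist r v ≠ 0) :
    ∃ u, T.Adj u v ∧ T.dist r u + 1 = T.dist r v := by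
  obtain ⟨p, hp⟩ := (hc r v).exists_walk_length_eq_dist
  have hlen : p.reverse.length = T.dist r v := by simpa using hp
  cases hpr : p.reverse with
  | nil => rw [hpr] at hlen; simp at hlen; exact absurd SimpleGraph.dist_self hv
  | cons h q =>
    rename_i x
    refine ⟨x, h.symm, ?_⟩
    have h1 : T.dist r x ≤ q.length := by
      simpa [SimpleGraph.dist_comm] using SimpleGraph.dist_le q
    have h2 : q.length + 1 = T.dist r v := by
      rw [hpr] at hlen; simpa using hlen
    have h3 : T.dist r v ≤ T.dist r x + T.dist x v := hc.dist_triangle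
    have h4 : T.dist x v ≤ 1 := by
      have := SimpleGraph.dist_le (SimpleGraph.Walk.cons h.symm SimpleGraph.Walk.nil : T.Walk x v)
      simpa using this
    omega

lemma parent_unique (htree : T.IsTree) (r : V) {u u' v : V}
    (h : T.Adj u v) (h' : T.Adj u' v) (hd : T.dist r u + 1 = T.dist r v)
    (hd' : T.dist r u' + 1 = T.dist r v) : u = u' := by
  have hc := htree.1
  obtain ⟨pu, hpu, hlu⟩ := hc.exists_path_of_dist r u
  obtain ⟨pu', hpu', hlu'⟩ := hc.exists_path_of_dist r u'
  have hP : (pu.concat h).IsPath := by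
    apply SimpleGraph.Walk.isPath_of_length_eq_dist
    simp [SimpleGraph.Walk.length_concat, hlu, hd]
  have hP' : (pu'.concat h').IsPath := by
    apply SimpleGraph.Walk.isPath_of_length_eq_dist
    simp [SimpleGraph.Walk.length_concat, hlu', hd']
  obtain ⟨p0, -, hun⟩ := (SimpleGraph.isTree_iff_existsUnique_path.1 htree).2 r v
  obtain ⟨hv, -⟩ := SimpleGraph.Walk.concat_inj ((hun _ hP).trans (hun _ hP').symm)
  exact hv

lemma adj_dist (htree : T.IsTree) (r : V) {u v : V} (h : T.Adj u v) :
    T.dist r u + 1 = T.dist r v ∨ T.dist r v + 1 = T.dist r u := by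
  have hc := htree.1
  have h1 : T.dist u v ≤ 1 := by
    have := SimpleGraph.dist_le (SimpleGraph.Walk.cons h SimpleGraph.Walk.nil : T.Walk u v)
    simpa using this
  have h2 : T.dist v u ≤ 1 := by rwa [SimpleGraph.dist_comm] at h1
  have t1 : T.dist r v ≤ T.dist r u + T.dist u v := hc.dist_triangle
  have t2 : T.dist r u ≤ T.dist r v + T.dist v u := hc.dist_triangle
  have hne : T.dist r u ≠ T.dist r v := by
    intro heq
    obtain ⟨pu, hpu, hlu⟩ := hc.exists_path_of_dist r u
    have hvns : v ∉ pu.support := by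
      intro hv
      have htake : T.dist r v ≤ (pu.takeUntil v hv).length := SimpleGraph.dist_le _
      have hsplit : (pu.takeUntil v hv).length + (pu.dropUntil v hv).length = pu.length := by
        conv_rhs => rw [← pu.take_spec hv]
        rw [SimpleGraph.Walk.length_append]
      have hdrop : (pu.dropUntil v hv).length = 0 := by omega
      exact h.ne (SimpleGraph.Walk.eq_of_length_eq_zero hdrop).symm
    have hP : (pu.concat h).IsPath := by
      rw [SimpleGraph.Walk.isPath_def, SimpleGraph.Walk.support_concat]
      simp only [List.concat_eq_append, List.nodup_append]
      refine ⟨hpu.support_nodup, List.nodup_singleton v, ?_⟩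
      intro a ha b hb
      simp at hb
      rw [hb]
      rintro rfl
      exact hvns ha
    obtain ⟨pv, hpv, hlv⟩ := hc.exists_path_of_dist r v
    obtain ⟨p0, -, hun⟩ := (SimpleGraph.isTree_iff_existsUnique_path.1 htree).2 r v
    have := congrArg SimpleGraph.Walk.length ((hun _ hP).trans (hun _ hpv).symm)
    rw [SimpleGraph.Walk.length_concat] at this
    omega
  omega

lemma par_spec (hc : T.Connected) (r : V) {v : V} (hv : T.dist r v ≠ 0) :
    T.Adj (par T r v) v ∧ T.dist r (par T r v) + 1 = T.dist r v := by
  rw [par, dif_pos (exists_parent T hc r hv)]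
  exact (exists_parent T hc r hv).choose_spec

lemma par_eq (htree : T.IsTree) (r : V) {u v : V} (h : T.Adj u v)
    (hd : T.dist r u + 1 = T.dist r v) : par T r v = u := by
  have hv : T.dist r v ≠ 0 := by omega
  obtain ⟨h1, h2⟩ := par_spec T htree.1 r hv
  exact parent_unique T htree r h1 h h2 hd

lemma mem_childSet_par (hc : T.Connected) (r : V) {v : V} (hv : T.dist r v ≠ 0) :
    v ∈ childSet T r (par T r v) := by
  obtain ⟨h1, h2⟩ := par_spec T hc r hv
  exact ⟨h1, h2⟩

lemma childSet_finite [T.LocallyFinite] (r a : V) : (childSet T r a).Finite :=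
  Set.Finite.subset (Set.toFinite (T.neighborSet a)) fun _ hu => hu.1

lemma childSet_ncard (htree : T.IsTree) [T.LocallyFinite] {q : ℕ}
    (hreg : T.IsRegularOfDegree (q + 1)) (r a : V) :
    (childSet T r a).ncard = if T.dist r a = 0 then q + 1 else q := by
  have hc := htree.1
  by_cases h0 : T.dist r a = 0
  · rw [if_pos h0]
    have hra : r = a := (hc.dist_eq_zero_iff).1 h0
    subst hra
    have hset : childSet T r r = T.neighborSet r := by
      ext u
      constructor
      · rintro ⟨h1, -⟩; exact h1
      · intro h1
        refine ⟨h1, ?_⟩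
        rw [h0, SimpleGraph.dist_eq_one_iff_adj.2 h1]
    rw [hset]
    have : (T.neighborSet r).ncard = T.degree r := by
      rw [Set.ncard_eq_toFinset_card']
      rfl
    rw [this, hreg r]
  · rw [if_neg h0]
    obtain ⟨hadj, hdp⟩ := par_spec T hc r h0
    have hset : childSet T r a = T.neighborSet a \ {par T r a} := by
      ext u
      constructor
      · rintro ⟨h1, h2⟩
        refine ⟨h1, ?_⟩
        intro hu
        rw [Set.mem_singleton_iff] at hu
        subst hu
        omega
      · rintro ⟨h1, h2⟩
        rw [Set.mem_singleton_iff] at h2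
        refine ⟨h1, ?_⟩
        rcases adj_dist T htree r h1 with hd | hd
        · exact hd
        · exact absurd (parent_unique T htree r h1.symm hadj hd hdp) h2
    rw [hset, Set.ncard_diff_singleton_of_mem
      (show par T r a ∈ T.neighborSet a from hadj.symm)]
    have hn : (T.neighborSet a).ncard = q + 1 := by
      rw [Set.ncard_eq_toFinset_card']
      exact hreg a
    omega

/-- The forward map, level by level. -/
def F (r s x₁ y₁ : V) : ℕ → V → V
  | 0, _ => s
  | n + 1, v =>
    (pick x₁ y₁ (childSet T r (par T r v)) (childSet T s (F r s x₁ y₁ n (par T r v)))).1 v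

/-- The backward map, level by level. -/
def Gg (r s x₁ y₁ : V) : ℕ → V → V
  | 0, _ => r
  | n + 1, w =>
    (pick x₁ y₁ (childSet T r (Gg r s x₁ y₁ n (par T s w))) (childSet T s (par T s w))).2 w

variable {T}

lemma main_lemma (htree : T.IsTree) [T.LocallyFinite] {q : ℕ}
    (hreg : T.IsRegularOfDegree (q + 1)) (r s x₁ y₁ : V) : ∀ n : ℕ,
    (∀ v, T.dist r v = n →
      T.dist s (F T r s x₁ y₁ n v) = n ∧ Gg T r s x₁ y₁ n (F T r s x₁ y₁ n v) = v) ∧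
    (∀ w, T.dist s w = n →
      T.dist r (Gg T r s x₁ y₁ n w) = n ∧ F T r s x₁ y₁ n (Gg T r s x₁ y₁ n w) = w) := by
  have hc := htree.1
  intro n
  induction n with
  | zero =>
    constructor
    · intro v hv
      refine ⟨by simp [F], ?_⟩
      rw [Gg]
      exact (hc.dist_eq_zero_iff).1 hv
    · intro w hw
      refine ⟨by simp [Gg], ?_⟩
      rw [F]
      exact (hc.dist_eq_zero_iff).1 hw
  | succ n ih =>
    constructor
    · intro v hv
      have hv0 : T.dist r v ≠ 0 := by omega
      obtain ⟨hadj, hdp⟩ := par_spec T hc r hv0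
      set p := par T r v with hp
      have hdpn : T.dist r p = n := by omega
      obtain ⟨hb1, hb2⟩ := ih.1 p hdpn
      set b := F T r s x₁ y₁ n p with hbdef
      have good := pick_good (childSet_finite T r p) (childSet_finite T s b)
        (by rw [childSet_ncard T htree hreg r p, childSet_ncard T htree hreg s b, hdpn, hb1])
        x₁ y₁
      have hvA : v ∈ childSet T r p := mem_childSet_par T hc r hv0
      have hFv : F T r s x₁ y₁ (n + 1) v =
          (pick x₁ y₁ (childSet T r p) (childSet T s b)).1 v := by
        rw [F]
      have hmem : F T r s x₁ y₁ (n + 1) v ∈ childSet T s b := by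
        rw [hFv]; exact good.1 v hvA
      obtain ⟨hadj', hd'⟩ := hmem
      have hds : T.dist s (F T r s x₁ y₁ (n + 1) v) = n + 1 := by omega
      refine ⟨hds, ?_⟩
      have hpar' : par T s (F T r s x₁ y₁ (n + 1) v) = b :=
        par_eq T htree s hadj' (by omega)
      rw [Gg, hpar', hb2, hFv]
      exact good.2.2.1 v hvA
    · intro w hw
      have hw0 : T.dist s w ≠ 0 := by omega
      obtain ⟨hadj, hdp⟩ := par_spec T hc s hw0
      set p := par T s w with hp
      have hdpn : T.dist s p = n := by omega
      obtain ⟨hb1, hb2⟩ := ih.2 p hdpn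
      set a := Gg T r s x₁ y₁ n p with hadef
      have good := pick_good (childSet_finite T r a) (childSet_finite T s p)
        (by rw [childSet_ncard T htree hreg r a, childSet_ncard T htree hreg s p, hdpn, hb1])
        x₁ y₁
      have hwB : w ∈ childSet T s p := mem_childSet_par T hc s hw0
      have hGw : Gg T r s x₁ y₁ (n + 1) w =
          (pick x₁ y₁ (childSet T r a) (childSet T s p)).2 w := by
        rw [Gg]
      have hmem : Gg T r s x₁ y₁ (n + 1) w ∈ childSet T r a := by
        rw [hGw]; exact good.2.1 w hwB
      obtain ⟨hadj', hd'⟩ := hmem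
      have hdr : T.dist r (Gg T r s x₁ y₁ (n + 1) w) = n + 1 := by omega
      refine ⟨hdr, ?_⟩
      have hpar' : par T r (Gg T r s x₁ y₁ (n + 1) w) = a :=
        par_eq T htree r hadj' (by omega)
      rw [F, hpar', hb2, hGw]
      exact good.2.2.2.1 w hwB

variable (T)

/-- The forward map. -/
def bigF (r s x₁ y₁ : V) (v : V) : V := F T r s x₁ y₁ (T.dist r v) v

/-- The backward map. -/
def bigG (r s x₁ y₁ : V) (w : V) : V := Gg T r s x₁ y₁ (T.dist s w) w

variable {T}

lemma bigG_bigF (htree : T.IsTree) [T.LocallyFinite] {q : ℕ}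
    (hreg : T.IsRegularOfDegree (q + 1)) (r s x₁ y₁ : V) (v : V) :
    bigG T r s x₁ y₁ (bigF T r s x₁ y₁ v) = v := by
  have h := (main_lemma htree hreg r s x₁ y₁ (T.dist r v)).1 v rfl
  rw [bigG, bigF, h.1]
  exact h.2

lemma bigF_bigG (htree : T.IsTree) [T.LocallyFinite] {q : ℕ}
    (hreg : T.IsRegularOfDegree (q + 1)) (r s x₁ y₁ : V) (w : V) :
    bigF T r s x₁ y₁ (bigG T r s x₁ y₁ w) = w := by
  have h := (main_lemma htree hreg r s x₁ y₁ (T.dist s w)).2 w rfl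
  rw [bigF, bigG, h.1]
  exact h.2

lemma bigF_adj (htree : T.IsTree) [T.LocallyFinite] {q : ℕ}
    (hreg : T.IsRegularOfDegree (q + 1)) (r s x₁ y₁ : V) {u v : V} (h : T.Adj u v) :
    T.Adj (bigF T r s x₁ y₁ u) (bigF T r s x₁ y₁ v) := by
  have step : ∀ {u v : V}, T.Adj u v → T.dist r u + 1 = T.dist r v →
      T.Adj (bigF T r s x₁ y₁ u) (bigF T r s x₁ y₁ v) := by
    intro u v h hd
    have hpar : par T r v = u := par_eq T htree r h hd
    have hb := (main_lemma htree hreg r s x₁ y₁ (T.dist r u)).1 u rfl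
    have good := pick_good (childSet_finite T r u)
      (childSet_finite T s (F T r s x₁ y₁ (T.dist r u) u))
      (by rw [childSet_ncard T htree hreg, childSet_ncard T htree hreg, hb.1]) x₁ y₁
    have hFv : bigF T r s x₁ y₁ v = (pick x₁ y₁ (childSet T r u)
        (childSet T s (F T r s x₁ y₁ (T.dist r u) u))).1 v := by
      rw [bigF, show T.dist r v = T.dist r u + 1 by omega, F, hpar]
    have hmem := good.1 v ⟨h, hd⟩
    rw [hFv, bigF]
    exact hmem.1
  rcases adj_dist T htree r h with hd | hd
  · exact step h hd
  · exact (step h.symm hd).symm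

lemma bigG_adj (htree : T.IsTree) [T.LocallyFinite] {q : ℕ}
    (hreg : T.IsRegularOfDegree (q + 1)) (r s x₁ y₁ : V) {u v : V} (h : T.Adj u v) :
    T.Adj (bigG T r s x₁ y₁ u) (bigG T r s x₁ y₁ v) := by
  have step : ∀ {u v : V}, T.Adj u v → T.dist s u + 1 = T.dist s v →
      T.Adj (bigG T r s x₁ y₁ u) (bigG T r s x₁ y₁ v) := by
    intro u v h hd
    have hpar : par T s v = u := par_eq T htree s h hd
    have hb := (main_lemma htree hreg r s x₁ y₁ (T.dist s u)).2 u rfl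
    have good := pick_good (childSet_finite T r (Gg T r s x₁ y₁ (T.dist s u) u))
      (childSet_finite T s u)
      (by rw [childSet_ncard T htree hreg, childSet_ncard T htree hreg, hb.1]) x₁ y₁
    have hGv : bigG T r s x₁ y₁ v = (pick x₁ y₁
        (childSet T r (Gg T r s x₁ y₁ (T.dist s u) u)) (childSet T s u)).2 v := by
      rw [bigG, show T.dist s v = T.dist s u + 1 by omega, Gg, hpar]
    have hmem := good.2.1 v ⟨h, hd⟩
    rw [hGv, bigG]
    exact hmem.1
  rcases adj_dist T htree s h with hd | hd
  · exact step h hd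
  · exact (step h.symm hd).symm

lemma bigF_root (T : SimpleGraph V) (r s x₁ y₁ : V) : bigF T r s x₁ y₁ r = s := by
  rw [bigF, SimpleGraph.dist_self, F]

lemma bigF_one (htree : T.IsTree) [T.LocallyFinite] {q : ℕ}
    (hreg : T.IsRegularOfDegree (q + 1)) (r s x₁ y₁ : V)
    (hx : T.Adj r x₁) (hy : T.Adj s y₁) : bigF T r s x₁ y₁ x₁ = y₁ := by
  have hd1 : T.dist r x₁ = 1 := SimpleGraph.dist_eq_one_iff_adj.2 hx
  have hd1' : T.dist s y₁ = 1 := SimpleGraph.dist_eq_one_iff_adj.2 hy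
  have hpar : par T r x₁ = r := par_eq T htree r hx (by rw [SimpleGraph.dist_self]; omega)
  have good := pick_good (childSet_finite T r r) (childSet_finite T s s)
    (by rw [childSet_ncard T htree hreg, childSet_ncard T htree hreg,
          SimpleGraph.dist_self, SimpleGraph.dist_self]) x₁ y₁
  have hFx : bigF T r s x₁ y₁ x₁ = (pick x₁ y₁ (childSet T r r) (childSet T s s)).1 x₁ := by
    rw [bigF, hd1]
    simp only [F]
    rw [hpar]
  rw [hFx]
  exact good.2.2.2.2 ⟨hx, by rw [SimpleGraph.dist_self]; omega⟩
    ⟨hy, by rw [SimpleGraph.dist_self]; omega⟩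

end Stmt16

end Stmt16Aux

theorem stmt_16 (q : ℕ) (hq : 2 ≤ q)
    {V : Type*} (T : SimpleGraph V) (htree : T.IsTree)
    [T.LocallyFinite] (hreg : T.IsRegularOfDegree (q + 1)) :
    ∀ x₀ x₁ y₀ y₁ : V, T.Adj x₀ x₁ → T.Adj y₀ y₁ →
      ∃ f : T ≃g T, f x₀ = y₀ ∧ f x₁ = y₁ := by
  intro x₀ x₁ y₀ y₁ hx hy
  refine ⟨⟨⟨Stmt16.bigF T x₀ y₀ x₁ y₁, Stmt16.bigG T x₀ y₀ x₁ y₁,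
    fun v => Stmt16.bigG_bigF htree hreg x₀ y₀ x₁ y₁ v,
    fun w => Stmt16.bigF_bigG htree hreg x₀ y₀ x₁ y₁ w⟩, ?_⟩, ?_, ?_⟩
  · intro a b
    simp only [Equiv.coe_fn_mk]
    constructor
    · intro hab
      have := Stmt16.bigG_adj htree hreg x₀ y₀ x₁ y₁ hab
      rwa [Stmt16.bigG_bigF htree hreg x₀ y₀ x₁ y₁ a,
        Stmt16.bigG_bigF htree hreg x₀ y₀ x₁ y₁ b] at this
    · exact Stmt16.bigF_adj htree hreg x₀ y₀ x₁ y₁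
  · exact Stmt16.bigF_root T x₀ y₀ x₁ y₁
  · exact Stmt16.bigF_one htree hreg x₀ y₀ x₁ y₁ hx hy
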